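/- Let 𝕂 be ℝ or ℂ and let r = (r_1,…,r_n) be a vector of positive reals that is admissible. Suppose F ∈ 𝕂^{d×n} is a critical point of Φ_r (∇Φ_r(F) = 0), all columns of F are nonzero, and F ∉ PF_d(r). Then there is a real eigenvalue λ of the frame operator F F* such that, letting E = {v ∈ 𝕂^d : F F* v = λ v} be its eigenspace, one has Σ_{i : f_i ∈ E} r_i > dim_𝕂 E. -/

import Mathlib

open scoped BigOperators Matrix

attribute [local instance] Matrix.normedAddCommGroup Matrix.normedSpace

/-- `r` is admissible. -/
def AdmissibleR (d n : ℕ) (r : Fin n → ℝ) : Prop :=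
  (∑ i, r i = d) ∧
    ∀ k : ℕ, 1 ≤ k → k ≤ d - 1 →
      ∀ I : Finset (Fin n), I.card = k → ∑ i ∈ I, r i ≤ k

/-- The total frame energy. -/
noncomputable def totalFrameEnergy {d n : ℕ} {𝕂 : Type*} [RCLike 𝕂]
    (r : Fin n → ℝ) (F : Matrix (Fin d) (Fin n) 𝕂) : ℝ :=
  (∑ i, ∑ j, ‖(F * Fᴴ - 1 : Matrix (Fin d) (Fin d) 𝕂) i j‖ ^ 2) +
    (1 / 4) * ∑ i, ((∑ j, ‖F j i‖ ^ 2) / r i - 1) ^ 2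

/-- The real Frobenius inner product `⟨X, Y⟩ = Re tr (Xᴴ Y)`, written entrywise. -/
noncomputable def frobInner {d n : ℕ} {𝕂 : Type*} [RCLike 𝕂]
    (X Y : Matrix (Fin d) (Fin n) 𝕂) : ℝ :=
  ∑ i, ∑ j, RCLike.re ((starRingEnd 𝕂) (X i j) * Y i j)

/-- `G` is the gradient of `Φ` at `F` w.r.t. the real Frobenius inner product. -/
noncomputable def IsFrobGradientAt {d n : ℕ} {𝕂 : Type*} [RCLike 𝕂]
    (Φ : Matrix (Fin d) (Fin n) 𝕂 → ℝ) (G F : Matrix (Fin d) (Fin n) 𝕂) : Prop :=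
  DifferentiableAt ℝ Φ F ∧ ∀ X, fderiv ℝ Φ F X = frobInner G X

section Stmt12Helpers
open RCLike
open scoped Matrix

variable {𝕂 : Type*} [RCLike 𝕂] {d n : ℕ}

private lemma stmt12_normSq_eq_re (z : 𝕂) : ‖z‖ ^ 2 = RCLike.re (star z * z) := by
  rw [RCLike.star_def, RCLike.conj_mul, ← RCLike.ofReal_pow, RCLike.ofReal_re]

private lemma stmt12_re_star (z : 𝕂) : RCLike.re (star z) = RCLike.re z := by
  rw [RCLike.star_def, RCLike.conj_re]

private lemma stmt12_hasDerivAt_coe : HasDerivAt (fun t : ℝ => (t : 𝕂)) 1 0 := by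
  simpa using (RCLike.ofRealCLM (K := 𝕂)).hasDerivAt (x := (0:ℝ))

private lemma stmt12_key_deriv (a b c : 𝕂) :
    HasDerivAt (fun t : ℝ => ‖a + (t : 𝕂) * b + (t : 𝕂) * (t : 𝕂) * c‖ ^ 2)
      (2 * RCLike.re (star a * b)) 0 := by
  have hz : HasDerivAt (fun t : ℝ => a + (t : 𝕂) * b + (t : 𝕂) * (t : 𝕂) * c) b 0 := by
    have h1 := (stmt12_hasDerivAt_coe (𝕂 := 𝕂)).mul_const b
    have h2 := ((stmt12_hasDerivAt_coe (𝕂 := 𝕂)).mul (stmt12_hasDerivAt_coe (𝕂 := 𝕂))).mul_const c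
    have h := ((hasDerivAt_const (0:ℝ) a).fun_add h1).fun_add h2
    simpa using h
  have hzc : HasDerivAt (fun t : ℝ => (starRingEnd 𝕂) (a + (t : 𝕂) * b + (t : 𝕂) * (t : 𝕂) * c))
      ((starRingEnd 𝕂) b) 0 :=
    (RCLike.conjCLE (K := 𝕂)).toContinuousLinearMap.hasFDerivAt.comp_hasDerivAt 0 hz
  have hw := hzc.mul hz
  have hre := (RCLike.reCLM (K := 𝕂)).hasFDerivAt.comp_hasDerivAt 0 hw
  have hfun : (fun t : ℝ => ‖a + (t : 𝕂) * b + (t : 𝕂) * (t : 𝕂) * c‖ ^ 2)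
      = fun t : ℝ => RCLike.re (star (a + (t : 𝕂) * b + (t : 𝕂) * (t : 𝕂) * c)
          * (a + (t : 𝕂) * b + (t : 𝕂) * (t : 𝕂) * c)) := funext fun t => stmt12_normSq_eq_re _
  rw [hfun]
  convert hre using 1
  · rfl
  · rfl
  · rfl
  have h1 : RCLike.re ((starRingEnd 𝕂) b * a) = RCLike.re ((starRingEnd 𝕂) a * b) := by
    rw [← RCLike.conj_re ((starRingEnd 𝕂) b * a)]
    simp [map_mul, mul_comm]
  simp [RCLike.star_def, h1]
  ring

private lemma stmt12_key_deriv2 (a b : 𝕂) :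
    HasDerivAt (fun t : ℝ => ‖a + (t : 𝕂) * b‖ ^ 2) (2 * RCLike.re (star a * b)) 0 := by
  simpa using stmt12_key_deriv a b 0

private lemma stmt12_entry_expand (F X : Matrix (Fin d) (Fin n) 𝕂) (t : ℝ) (i j : Fin d) :
    ((F + t • X) * (F + t • X)ᴴ - 1 : Matrix (Fin d) (Fin d) 𝕂) i j
      = (F * Fᴴ - 1 : Matrix (Fin d) (Fin d) 𝕂) i j + (t : 𝕂) * ((X * Fᴴ + F * Xᴴ) i j)
        + (t : 𝕂) * (t : 𝕂) * ((X * Xᴴ) i j) := by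
  have hk : ∀ k, (F i k + (t:𝕂) * X i k) * ((starRingEnd 𝕂) (F j k) + (t:𝕂) * (starRingEnd 𝕂) (X j k))
      = F i k * (starRingEnd 𝕂) (F j k)
        + (t:𝕂) * (X i k * (starRingEnd 𝕂) (F j k) + F i k * (starRingEnd 𝕂) (X j k))
        + (t:𝕂) * (t:𝕂) * (X i k * (starRingEnd 𝕂) (X j k)) := fun k => by ring
  simp only [Matrix.sub_apply, Matrix.add_apply, Matrix.mul_apply, Matrix.conjTranspose_apply,
    Matrix.smul_apply, star_add, star_mul', RCLike.star_def, RCLike.conj_ofReal,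
    RCLike.real_smul_eq_coe_mul]
  rw [Finset.sum_congr rfl fun k _ => hk k]
  rw [Finset.sum_add_distrib, Finset.sum_add_distrib, ← Finset.mul_sum, ← Finset.mul_sum,
    Finset.sum_add_distrib]
  ring

private lemma stmt12_phi_deriv (r : Fin n → ℝ) (F X : Matrix (Fin d) (Fin n) 𝕂) :
    HasDerivAt (fun t : ℝ => totalFrameEnergy r (F + t • X))
      ((∑ i, ∑ j, 2 * RCLike.re (star ((F * Fᴴ - 1 : Matrix (Fin d) (Fin d) 𝕂) i j)
          * ((X * Fᴴ + F * Xᴴ) i j)))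
        + ∑ i, ((∑ j, ‖F j i‖ ^ 2) / r i - 1) / r i * ∑ j, RCLike.re (star (F j i) * X j i))
      0 := by
  have hfun : (fun t : ℝ => totalFrameEnergy r (F + t • X))
      = fun t : ℝ => (∑ i, ∑ j, ‖((F + t • X) * (F + t • X)ᴴ - 1 : Matrix (Fin d) (Fin d) 𝕂) i j‖ ^ 2)
          + (1 / 4) * ∑ i, ((∑ j, ‖(F + t • X) j i‖ ^ 2) / r i - 1) ^ 2 := rfl
  rw [hfun]
  have hterm1 : HasDerivAt
      (fun t : ℝ => ∑ i, ∑ j, ‖((F + t • X) * (F + t • X)ᴴ - 1 : Matrix (Fin d) (Fin d) 𝕂) i j‖ ^ 2)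
      (∑ i, ∑ j, 2 * RCLike.re (star ((F * Fᴴ - 1 : Matrix (Fin d) (Fin d) 𝕂) i j)
          * ((X * Fᴴ + F * Xᴴ) i j))) 0 := by
    apply HasDerivAt.fun_sum; intro i _; apply HasDerivAt.fun_sum; intro j _
    have h : (fun t : ℝ => ‖((F + t • X) * (F + t • X)ᴴ - 1 : Matrix (Fin d) (Fin d) 𝕂) i j‖ ^ 2)
        = fun t : ℝ => ‖(F * Fᴴ - 1 : Matrix (Fin d) (Fin d) 𝕂) i j
            + (t : 𝕂) * ((X * Fᴴ + F * Xᴴ) i j)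
            + (t : 𝕂) * (t : 𝕂) * ((X * Xᴴ) i j)‖ ^ 2 :=
      funext fun t => by rw [stmt12_entry_expand]
    rw [h]
    exact stmt12_key_deriv _ _ _
  have hN : ∀ i, HasDerivAt (fun t : ℝ => ∑ j, ‖(F + t • X) j i‖ ^ 2)
      (∑ j, 2 * RCLike.re (star (F j i) * X j i)) 0 := by
    intro i
    have h : (fun t : ℝ => ∑ j, ‖(F + t • X) j i‖ ^ 2)
        = fun t : ℝ => ∑ j, ‖F j i + (t : 𝕂) * X j i‖ ^ 2 := funext fun t => by
      simp [Matrix.add_apply, Matrix.smul_apply, RCLike.real_smul_eq_coe_mul]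
    rw [h]
    exact HasDerivAt.fun_sum fun j _ => stmt12_key_deriv2 _ _
  have hterm2 : HasDerivAt
      (fun t : ℝ => (1 / 4) * ∑ i, ((∑ j, ‖(F + t • X) j i‖ ^ 2) / r i - 1) ^ 2)
      ((1 / 4) * ∑ i, ((2 : ℕ) * ((∑ j, ‖F j i‖ ^ 2) / r i - 1) ^ 1
          * ((∑ j, 2 * RCLike.re (star (F j i) * X j i)) / r i))) 0 := by
    apply HasDerivAt.const_mul
    apply HasDerivAt.fun_sum
    intro i _
    have h := (((hN i).div_const (r i)).sub_const 1).fun_pow 2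
    simpa using h
  have htot := hterm1.fun_add hterm2
  convert htot using 1
  · rfl
  · rfl
  rw [Finset.mul_sum]
  congr 1
  apply Finset.sum_congr rfl
  intro i _
  rw [← Finset.mul_sum]
  ring

private lemma stmt12_crit_eq (r : Fin n → ℝ) (F : Matrix (Fin d) (Fin n) 𝕂)
    (hcrit : IsFrobGradientAt (totalFrameEnergy r) (0 : Matrix (Fin d) (Fin n) 𝕂) F)
    (X : Matrix (Fin d) (Fin n) 𝕂) :
    (∑ i, ∑ j, 2 * RCLike.re (star ((F * Fᴴ - 1 : Matrix (Fin d) (Fin d) 𝕂) i j)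
        * ((X * Fᴴ + F * Xᴴ) i j)))
      + ∑ i, ((∑ j, ‖F j i‖ ^ 2) / r i - 1) / r i * ∑ j, RCLike.re (star (F j i) * X j i)
      = 0 := by
  have hγ : HasDerivAt (fun t : ℝ => F + t • X) X 0 := by
    exact (((hasDerivAt_id (0:ℝ)).smul_const X).const_add F).congr_deriv (one_smul ℝ X)
  have h0 : F + (0 : ℝ) • X = F := by simp
  have hΦ := hcrit.1.hasFDerivAt
  rw [← h0] at hΦ
  have hcomp := hΦ.comp_hasDerivAt 0 hγ
  have huniq := (stmt12_phi_deriv r F X).unique hcomp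
  rw [h0] at huniq
  rw [huniq]
  exact (hcrit.2 X).trans (by simp [frobInner])

private lemma stmt12_hermA (F : Matrix (Fin d) (Fin n) 𝕂) (i j : Fin d) :
    star ((F * Fᴴ - 1 : Matrix (Fin d) (Fin d) 𝕂) i j)
      = (F * Fᴴ - 1 : Matrix (Fin d) (Fin d) 𝕂) j i := by
  simp only [Matrix.sub_apply, Matrix.mul_apply, Matrix.conjTranspose_apply, Matrix.one_apply,
    star_sub, star_sum, star_mul', star_star, apply_ite (star : 𝕂 → 𝕂), star_one, star_zero]
  congr 1
  · exact Finset.sum_congr rfl fun k _ => mul_comm _ _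
  · simp [eq_comm]

private lemma stmt12_key_point (r : Fin n → ℝ) (F : Matrix (Fin d) (Fin n) 𝕂)
    (hcrit : ∀ X : Matrix (Fin d) (Fin n) 𝕂,
      (∑ i, ∑ j, 2 * RCLike.re (star ((F * Fᴴ - 1 : Matrix (Fin d) (Fin d) 𝕂) i j)
          * ((X * Fᴴ + F * Xᴴ) i j)))
        + ∑ i, ((∑ j, ‖F j i‖ ^ 2) / r i - 1) / r i * ∑ j, RCLike.re (star (F j i) * X j i)
        = 0)
    (k₀ : Fin d) (i₀ : Fin n) (x : 𝕂) :
    4 * RCLike.re (star (((F * Fᴴ - 1 : Matrix (Fin d) (Fin d) 𝕂) * F) k₀ i₀) * x)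
      + ((∑ j, ‖F j i₀‖ ^ 2) / r i₀ - 1) / r i₀ * RCLike.re (star (F k₀ i₀) * x) = 0 := by
  classical
  set A : Matrix (Fin d) (Fin d) 𝕂 := F * Fᴴ - 1 with hA
  set X : Matrix (Fin d) (Fin n) 𝕂 :=
    Matrix.of (fun k i => if k = k₀ then (if i = i₀ then x else 0) else 0) with hX
  have h := hcrit X
  have hXF : ∀ i j, (X * Fᴴ) i j = if i = k₀ then x * star (F j i₀) else 0 := by
    intro i j
    simp only [Matrix.mul_apply, Matrix.conjTranspose_apply, hX, Matrix.of_apply, ite_mul, zero_mul]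
    by_cases hi : i = k₀ <;> simp [hi, Finset.sum_ite_eq']
  have hFX : ∀ i j, (F * Xᴴ) i j = if j = k₀ then F i i₀ * star x else 0 := by
    intro i j
    simp only [Matrix.mul_apply, Matrix.conjTranspose_apply, hX, Matrix.of_apply]
    by_cases hj : j = k₀ <;>
      simp [hj, apply_ite (star : 𝕂 → 𝕂), mul_ite, mul_zero, Finset.sum_ite_eq']
  have hsecond : ∀ i : Fin n, (∑ j, RCLike.re (star (F j i) * X j i))
      = if i = i₀ then RCLike.re (star (F k₀ i₀) * x) else 0 := by
    intro i
    by_cases hi : i = i₀ <;>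
      simp [hX, hi, mul_ite, mul_zero, apply_ite RCLike.re, Finset.sum_ite_eq']
  simp only [hsecond, mul_ite, mul_zero, Finset.sum_ite_eq', Finset.mem_univ, if_true] at h
  have hpull : ∀ (P : Prop) [Decidable P] (f : Fin d → ℝ),
      (∑ j, if P then f j else 0) = if P then ∑ j, f j else 0 := by
    intro P _ f; split <;> simp
  simp only [Matrix.add_apply, hXF, hFX, mul_add, map_add, mul_ite, mul_zero, map_zero,
    apply_ite RCLike.re, Finset.sum_add_distrib, hpull, Finset.sum_ite_eq', Finset.mem_univ,
    if_true] at h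
  have hsum1 : (∑ j, RCLike.re (star (A k₀ j) * (x * star (F j i₀))))
      = RCLike.re (star ((A * F) k₀ i₀) * x) := by
    rw [Matrix.mul_apply, star_sum, Finset.sum_mul, map_sum]
    exact Finset.sum_congr rfl fun j _ => congrArg _ (by rw [star_mul']; ring)
  have hsum2 : (∑ i, RCLike.re (star (A i k₀) * (F i i₀ * star x)))
      = RCLike.re (star ((A * F) k₀ i₀) * x) := by
    rw [Matrix.mul_apply, star_sum, Finset.sum_mul, map_sum]
    refine Finset.sum_congr rfl fun i _ => ?_
    have hA' : ∀ p q, star (A p q) = A q p := fun p q => stmt12_hermA F p q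
    have hst : star (star (A i k₀) * (F i i₀ * star x))
        = star (A k₀ i) * star (F i i₀) * x := by
      rw [star_mul, star_mul, star_star, star_star, ← hA' k₀ i]
      ring
    rw [← stmt12_re_star (star (A i k₀) * (F i i₀ * star x)), hst]
    exact congrArg _ (by rw [star_mul']; try ring)
  rw [← Finset.mul_sum, ← Finset.mul_sum, hsum1, hsum2] at h
  linarith

private lemma stmt12_column_eq (r : Fin n → ℝ) (F : Matrix (Fin d) (Fin n) 𝕂)
    (hcrit : ∀ X : Matrix (Fin d) (Fin n) 𝕂,
      (∑ i, ∑ j, 2 * RCLike.re (star ((F * Fᴴ - 1 : Matrix (Fin d) (Fin d) 𝕂) i j)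
          * ((X * Fᴴ + F * Xᴴ) i j)))
        + ∑ i, ((∑ j, ‖F j i‖ ^ 2) / r i - 1) / r i * ∑ j, RCLike.re (star (F j i) * X j i)
        = 0)
    (k₀ : Fin d) (i₀ : Fin n) :
    (4 : 𝕂) * (((F * Fᴴ - 1 : Matrix (Fin d) (Fin d) 𝕂) * F) k₀ i₀)
      + ((((∑ j, ‖F j i₀‖ ^ 2) / r i₀ - 1) / r i₀ : ℝ) : 𝕂) * F k₀ i₀ = 0 := by
  set a : 𝕂 := ((F * Fᴴ - 1 : Matrix (Fin d) (Fin d) 𝕂) * F) k₀ i₀ with ha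
  set c : ℝ := ((∑ j, ‖F j i₀‖ ^ 2) / r i₀ - 1) / r i₀ with hc
  set g : 𝕂 := (4 : 𝕂) * a + (c : 𝕂) * F k₀ i₀ with hg
  have hk := stmt12_key_point r F hcrit k₀ i₀ g
  have hre0 : RCLike.re (star g * g) = 0 := by
    have e1 : star g * g = (((4:ℝ) : 𝕂)) * (star a * g) + ((c : ℝ) : 𝕂) * (star (F k₀ i₀) * g) := by
      rw [hg]
      simp only [star_add, star_mul', RCLike.star_def, RCLike.conj_ofReal, map_ofNat,
        RCLike.ofReal_ofNat]
      ring
    rw [e1, map_add, RCLike.re_ofReal_mul, RCLike.re_ofReal_mul]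
    rw [← ha, ← hc] at hk
    linarith [hk]
  have hn2 : ‖g‖ ^ 2 = 0 := by rw [stmt12_normSq_eq_re]; exact hre0
  have hgz : g = 0 := by
    have := pow_eq_zero_iff (two_ne_zero) |>.mp hn2
    exact norm_eq_zero.mp this
  rw [hg] at hgz
  exact hgz

private lemma stmt12_hermS (F : Matrix (Fin d) (Fin n) 𝕂) (i j : Fin d) :
    star ((F * Fᴴ) i j) = (F * Fᴴ) j i := by
  simp only [Matrix.mul_apply, Matrix.conjTranspose_apply, star_sum, star_mul', star_star]
  exact Finset.sum_congr rfl fun k _ => mul_comm _ _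

private lemma stmt12_sym_form (F : Matrix (Fin d) (Fin n) 𝕂) (x y : Fin d → 𝕂) :
    (∑ k, star (((F * Fᴴ).mulVec x) k) * y k) = ∑ k, star (x k) * ((F * Fᴴ).mulVec y) k := by
  simp only [Matrix.mulVec, dotProduct, star_sum, star_mul', Finset.sum_mul,
    Finset.mul_sum]
  rw [Finset.sum_comm]
  refine Finset.sum_congr rfl fun k _ => Finset.sum_congr rfl fun j _ => ?_
  rw [← stmt12_hermS F k j, star_star]
  ring

private lemma stmt12_orth (F : Matrix (Fin d) (Fin n) 𝕂) {α β : ℝ} (hab : α ≠ β) {x y : Fin d → 𝕂}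
    (hx : (F * Fᴴ).mulVec x = ((α : ℝ) : 𝕂) • x) (hy : (F * Fᴴ).mulVec y = ((β : ℝ) : 𝕂) • y) :
    (∑ k, star (x k) * y k) = 0 := by
  have h := stmt12_sym_form F x y
  rw [hx, hy] at h
  simp only [Pi.smul_apply, smul_eq_mul, star_mul', RCLike.star_def, RCLike.conj_ofReal] at h
  have h2 : (((α : ℝ) : 𝕂) - ((β : ℝ) : 𝕂)) * ∑ k, star (x k) * y k = 0 := by
    simp only [RCLike.star_def]
    rw [sub_mul, Finset.mul_sum, Finset.mul_sum, sub_eq_zero]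
    exact Eq.trans (Finset.sum_congr rfl fun k _ => by ring)
      (h.trans (Finset.sum_congr rfl fun k _ => by ring))
  have hne : (((α : ℝ) : 𝕂) - ((β : ℝ) : 𝕂)) ≠ 0 :=
    sub_ne_zero.mpr fun hh => hab (RCLike.ofReal_inj.mp hh)
  rcases mul_eq_zero.mp h2 with h3 | h3
  · exact absurd h3 hne
  · exact h3

private noncomputable def stmt12_dotL (w : Fin d → 𝕂) : (Fin d → 𝕂) →ₗ[𝕂] 𝕂 where
  toFun x := ∑ k, star (w k) * x k
  map_add' x y := by
    simp only [Pi.add_apply, mul_add]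
    exact Finset.sum_add_distrib
  map_smul' c x := by
    simp only [Pi.smul_apply, smul_eq_mul, RingHom.id_apply, Finset.mul_sum]
    exact Finset.sum_congr rfl fun k _ => by ring

private lemma stmt12_dotL_apply (w x : Fin d → 𝕂) :
    stmt12_dotL w x = ∑ k, star (w k) * x k := rfl

private lemma stmt12_mulVec_eq_sum_cols (F : Matrix (Fin d) (Fin n) 𝕂) (x : Fin d → 𝕂) :
    (F * Fᴴ).mulVec x = ∑ i : Fin n, (∑ k, star (F k i) * x k) • (fun k => F k i) := by
  funext m
  simp only [Matrix.mulVec, dotProduct, Matrix.mul_apply, Matrix.conjTranspose_apply,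
    Finset.sum_apply, Pi.smul_apply, smul_eq_mul, Finset.sum_mul, Finset.mul_sum]
  rw [Finset.sum_comm]
  exact Finset.sum_congr rfl fun i _ => Finset.sum_congr rfl fun j _ => by ring

open Module in
private lemma stmt12_trace_identity (F : Matrix (Fin d) (Fin n) 𝕂)
    (lam : Fin n → ℝ)
    (hS : ∀ i, (F * Fᴴ).mulVec (fun k => F k i) = ((lam i : ℝ) : 𝕂) • (fun k => F k i))
    (μ : ℝ) :
    μ * (Module.finrank 𝕂
        (Module.End.eigenspace ((F * Fᴴ).mulVecLin) (algebraMap ℝ 𝕂 μ)) : ℝ)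
      = ∑ i ∈ Finset.univ.filter (fun i => lam i = μ), ∑ k, ‖F k i‖ ^ 2 := by
  classical
  set E := Module.End.eigenspace ((F * Fᴴ).mulVecLin) (algebraMap ℝ 𝕂 μ) with hE
  have hmemE : ∀ x : Fin d → 𝕂, x ∈ E ↔ (F * Fᴴ).mulVec x = ((μ : ℝ) : 𝕂) • x := by
    intro x
    rw [hE, Module.End.mem_eigenspace_iff]
    simp [Matrix.mulVecLin_apply, RCLike.algebraMap_eq_ofReal]
  have hinv : ∀ x ∈ E, ((F * Fᴴ).mulVecLin) x ∈ E := by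
    intro x hx
    have := (hmemE x).mp hx
    rw [Matrix.mulVecLin_apply, this]
    exact E.smul_mem _ hx
  set Tres : E →ₗ[𝕂] E := ((F * Fᴴ).mulVecLin).restrict hinv with hTres
  have h1 : LinearMap.trace 𝕂 E Tres = ((μ : ℝ) : 𝕂) * (Module.finrank 𝕂 E : 𝕂) := by
    have heq : Tres = ((μ : ℝ) : 𝕂) • (LinearMap.id : E →ₗ[𝕂] E) := by
      refine LinearMap.ext fun x => Subtype.ext ?_
      show ((F * Fᴴ).mulVecLin x.1 : Fin d → 𝕂) = _
      rw [Matrix.mulVecLin_apply, (hmemE x.1).mp x.2]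
      rfl
    rw [heq, map_smul, LinearMap.trace_id, smul_eq_mul]
  have hmemcol : ∀ i, lam i = μ → (fun k => F k i) ∈ E := by
    intro i hi
    rw [hmemE, hS i, hi]
  have h2 : Tres = ∑ i ∈ (Finset.univ.filter (fun i => lam i = μ)).attach,
      (LinearMap.toSpanSingleton 𝕂 E
          ⟨fun k => F k i.1, hmemcol i.1 (Finset.mem_filter.mp i.2).2⟩).comp
        ((stmt12_dotL (fun k => F k i.1)).comp E.subtype) := by
    refine LinearMap.ext fun x => Subtype.ext ?_
    have hxE := (hmemE x.1).mp x.2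
    show ((F * Fᴴ).mulVecLin x.1 : Fin d → 𝕂) = _
    rw [Matrix.mulVecLin_apply, stmt12_mulVec_eq_sum_cols]
    have hvan : ∀ i ∈ Finset.univ \ Finset.univ.filter (fun i => lam i = μ),
        (∑ k, star (F k i) * x.1 k) • (fun k => F k i) = (0 : Fin d → 𝕂) := by
      intro i hi
      simp only [Finset.mem_sdiff, Finset.mem_filter, Finset.mem_univ, true_and] at hi
      have ho := stmt12_orth F hi (hS i) hxE
      rw [ho, zero_smul]
    have hsub : (∑ i : Fin n, (∑ k, star (F k i) * x.1 k) • (fun k => F k i))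
        = ∑ i ∈ Finset.univ.filter (fun i => lam i = μ),
            (∑ k, star (F k i) * x.1 k) • (fun k => F k i) := by
      refine (Finset.sum_subset (Finset.filter_subset _ _) ?_).symm
      intro i hi hni
      exact hvan i (Finset.mem_sdiff.mpr ⟨hi, hni⟩)
    rw [hsub, ← Finset.sum_attach (Finset.univ.filter fun i => lam i = μ)
      (fun i => (∑ k, star (F k i) * x.1 k) • (fun k => F k i))]
    simp only [LinearMap.sum_apply, AddSubmonoidClass.coe_finset_sum, LinearMap.comp_apply,
      Submodule.coe_subtype, LinearMap.toSpanSingleton_apply, SetLike.val_smul]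
    exact Finset.sum_congr rfl fun i _ => rfl
  have htr2 : LinearMap.trace 𝕂 E Tres
      = ∑ i ∈ (Finset.univ.filter (fun i => lam i = μ)).attach,
          (((∑ k, ‖F k i.1‖ ^ 2 : ℝ)) : 𝕂) := by
    rw [h2, map_sum]
    refine Finset.sum_congr rfl fun i _ => ?_
    rw [LinearMap.trace_comp_comm']
    have hcomp : ((stmt12_dotL (fun k => F k i.1)).comp E.subtype).comp
          (LinearMap.toSpanSingleton 𝕂 E
            ⟨fun k => F k i.1, hmemcol i.1 (Finset.mem_filter.mp i.2).2⟩)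
        = ((((∑ k, ‖F k i.1‖ ^ 2 : ℝ)) : 𝕂)) • (LinearMap.id : 𝕂 →ₗ[𝕂] 𝕂) := by
      refine LinearMap.ext fun z => ?_
      simp only [LinearMap.comp_apply, LinearMap.toSpanSingleton_apply, Submodule.coe_smul,
        Submodule.coe_subtype, map_smul, smul_eq_mul, LinearMap.smul_apply, LinearMap.id_apply]
      rw [stmt12_dotL_apply]
      have : (∑ k, star (F k i.1) * F k i.1) = (((∑ k, ‖F k i.1‖ ^ 2 : ℝ)) : 𝕂) := by
        push_cast
        refine Finset.sum_congr rfl fun k _ => ?_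
        rw [RCLike.star_def, RCLike.conj_mul]
      rw [this]
      ring
    rw [hcomp, map_smul, LinearMap.trace_id, Module.finrank_self]
    simp
  rw [h1] at htr2
  have h3 : (((μ * (Module.finrank 𝕂 E : ℝ)) : ℝ) : 𝕂)
      = (((∑ i ∈ Finset.univ.filter (fun i => lam i = μ), ∑ k, ‖F k i‖ ^ 2 : ℝ)) : 𝕂) := by
    rw [RCLike.ofReal_mul, RCLike.ofReal_natCast, htr2, RCLike.ofReal_sum,
      ← Finset.sum_attach (Finset.univ.filter (fun i => lam i = μ))
        (fun i => ((∑ k, ‖F k i‖ ^ 2 : ℝ) : 𝕂))]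
  exact_mod_cast h3

open Module in
private lemma stmt12_sum_finrank_le (T : Module.End 𝕂 (Fin d → 𝕂)) (s : Finset ℝ) :
    (∑ μ ∈ s, Module.finrank 𝕂 (T.eigenspace (algebraMap ℝ 𝕂 μ))) ≤ d := by
  classical
  set E : ℝ → Submodule 𝕂 (Fin d → 𝕂) := fun μ => T.eigenspace (algebraMap ℝ 𝕂 μ) with hEdef
  have hind : iSupIndep E :=
    T.eigenspaces_iSupIndep.comp (algebraMap ℝ 𝕂).injective
  have key : ∀ s : Finset ℝ, (∑ μ ∈ s, finrank 𝕂 (E μ)) ≤ finrank 𝕂 ↥(s.sup E) := by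
    intro s
    induction s using Finset.induction_on with
    | empty => simp
    | @insert a s ha ih =>
      rw [Finset.sum_insert ha, Finset.sup_insert]
      have hdis : Disjoint (E a) (s.sup E) := by
        refine (hind a).mono_right ?_
        refine Finset.sup_le fun b hb => ?_
        have hba : b ≠ a := fun h => ha (h ▸ hb)
        exact le_iSup₂ (f := fun b' (_ : b' ≠ a) => E b') b hba
      have heq := Submodule.finrank_sup_add_finrank_inf_eq (E a) (s.sup E)
      rw [disjoint_iff.mp hdis, finrank_bot] at heq
      omega
  calc (∑ μ ∈ s, finrank 𝕂 (E μ)) ≤ finrank 𝕂 ↥(s.sup E) := key s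
    _ ≤ finrank 𝕂 (Fin d → 𝕂) := Submodule.finrank_le _
    _ = d := finrank_fin_fun 𝕂

end Stmt12Helpers

open Classical in
/-- if `F` is a critical point of `Φ_r` with all columns nonzero and
`F ∉ PF_d(r)`, then some real eigenvalue `λ` of the frame operator `F Fᴴ` has an
eigenspace `E` with `Σ_{i : fᵢ ∈ E} rᵢ > dim E`. -/
theorem stmt_12 (d n : ℕ) (hd : 1 ≤ d) (hdn : d ≤ n) (𝕂 : Type*) [RCLike 𝕂]
    (r : Fin n → ℝ) (hr : ∀ i, 0 < r i) (hadm : AdmissibleR d n r)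
    (F : Matrix (Fin d) (Fin n) 𝕂)
    (hcrit : IsFrobGradientAt (totalFrameEnergy r) (0 : Matrix (Fin d) (Fin n) 𝕂) F)
    (hcols : ∀ i, ∃ k, F k i ≠ 0)
    (hnotPF : ¬(F * Fᴴ = 1 ∧ ∀ i, ∑ j, ‖F j i‖ ^ 2 = r i)) :
    ∃ lam : ℝ,
      Module.End.HasEigenvalue ((F * Fᴴ).mulVecLin) (algebraMap ℝ 𝕂 lam) ∧
      (Module.finrank 𝕂
          (Module.End.eigenspace ((F * Fᴴ).mulVecLin) (algebraMap ℝ 𝕂 lam)) : ℝ) <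
        ∑ i, if (fun k => F k i) ∈
            Module.End.eigenspace ((F * Fᴴ).mulVecLin) (algebraMap ℝ 𝕂 lam)
          then r i else 0 := by
  classical
  have hcrit' := stmt12_crit_eq r F hcrit
  have hcol0 : ∀ i, (fun k => F k i) ≠ (0 : Fin d → 𝕂) := by
    intro i h
    obtain ⟨k, hk⟩ := hcols i
    exact hk (congrFun h k)
  set ν : Fin n → ℝ := fun i => ∑ j, ‖F j i‖ ^ 2 with hνdef
  set lam : Fin n → ℝ := fun i => 1 - (ν i / r i - 1) / r i / 4 with hlamdef
  -- columns are eigenvectors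
  have hSi : ∀ i, (F * Fᴴ).mulVec (fun k => F k i) = ((lam i : ℝ) : 𝕂) • (fun k => F k i) := by
    intro i
    funext k
    have h := stmt12_column_eq r F hcrit' k i
    have hSF : ((F * Fᴴ - 1 : Matrix (Fin d) (Fin d) 𝕂) * F) k i
        = ((F * Fᴴ).mulVec (fun k' => F k' i)) k - F k i := by
      rw [Matrix.sub_mul, Matrix.one_mul, Matrix.sub_apply]
      congr 1
    rw [hSF] at h
    have hc : ((((ν i / r i - 1) / r i : ℝ)) : 𝕂) = 4 * (1 - ((lam i : ℝ) : 𝕂)) := by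
      rw [hlamdef]
      push_cast
      ring
    rw [hc] at h
    show ((F * Fᴴ).mulVec fun k' => F k' i) k = ((lam i : ℝ) : 𝕂) * F k i
    linear_combination (1 / 4 : 𝕂) * h
  have hmem : ∀ i, (fun k => F k i) ∈
      Module.End.eigenspace ((F * Fᴴ).mulVecLin) (algebraMap ℝ 𝕂 (lam i)) := by
    intro i
    rw [Module.End.mem_eigenspace_iff]
    simp only [Matrix.mulVecLin_apply, RCLike.algebraMap_eq_ofReal]
    exact hSi i
  have hfiber : ∀ (μ : ℝ) (i : Fin n),
      ((fun k => F k i) ∈ Module.End.eigenspace ((F * Fᴴ).mulVecLin) (algebraMap ℝ 𝕂 μ))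
        ↔ lam i = μ := by
    intro μ i
    constructor
    · intro hmemμ
      by_contra hne
      have hy : (F * Fᴴ).mulVec (fun k => F k i) = ((μ : ℝ) : 𝕂) • (fun k => F k i) := by
        have := Module.End.mem_eigenspace_iff.mp hmemμ
        rw [Matrix.mulVecLin_apply] at this
        rw [this, RCLike.algebraMap_eq_ofReal]
      have h0 := stmt12_orth F hne (hSi i) hy
      have hcast : ((ν i : ℝ) : 𝕂) = 0 := by
        rw [← h0, hνdef]
        push_cast
        exact Finset.sum_congr rfl fun k _ => by rw [RCLike.star_def, RCLike.conj_mul]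
      have hν0 : ν i = 0 := by exact_mod_cast hcast
      have hall : ∀ k, F k i = 0 := by
        intro k
        have hz := (Finset.sum_eq_zero_iff_of_nonneg
          (fun k _ => sq_nonneg ‖F k i‖)).mp hν0 k (Finset.mem_univ k)
        exact norm_eq_zero.mp (pow_eq_zero_iff two_ne_zero |>.mp hz)
      exact hcol0 i (funext hall)
    · rintro rfl
      exact hmem i
  have heig : ∀ i, Module.End.HasEigenvalue ((F * Fᴴ).mulVecLin) (algebraMap ℝ 𝕂 (lam i)) :=
    fun i => Module.End.hasEigenvalue_of_hasEigenvector ⟨hmem i, hcol0 i⟩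
  by_contra hcon
  push_neg at hcon
  set Λ : Finset ℝ := Finset.image lam Finset.univ with hΛ
  set Efr : ℝ → ℕ := fun μ => Module.finrank 𝕂
    (Module.End.eigenspace ((F * Fᴴ).mulVecLin) (algebraMap ℝ 𝕂 μ)) with hEfr
  set fib : ℝ → Finset (Fin n) := fun μ => Finset.univ.filter (fun i => lam i = μ) with hfib
  have hd' : (∑ i, r i) = (d : ℝ) := hadm.1
  have hsplit : ∑ μ ∈ Λ, ∑ i ∈ fib μ, r i = ∑ i, r i :=
    Finset.sum_fiberwise_of_maps_to (fun i _ => Finset.mem_image_of_mem lam (Finset.mem_univ i)) r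
  have hle1 : ∀ μ ∈ Λ, (∑ i ∈ fib μ, r i) ≤ (Efr μ : ℝ) := by
    intro μ hμ
    obtain ⟨i₀, _, hi₀⟩ := Finset.mem_image.mp hμ
    have heigμ : Module.End.HasEigenvalue ((F * Fᴴ).mulVecLin) (algebraMap ℝ 𝕂 μ) :=
      hi₀ ▸ heig i₀
    have h := hcon μ heigμ
    rw [← Finset.sum_filter] at h
    have e1 : (Finset.univ.filter fun i => (fun k => F k i) ∈
        Module.End.eigenspace ((F * Fᴴ).mulVecLin) (algebraMap ℝ 𝕂 μ)) = fib μ := by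
      ext i
      simp only [Finset.mem_filter, Finset.mem_univ, true_and, hfib]
      exact hfiber μ i
    rwa [e1] at h
  have hle2 : (∑ μ ∈ Λ, (Efr μ : ℝ)) ≤ (d : ℝ) := by
    exact_mod_cast stmt12_sum_finrank_le ((F * Fᴴ).mulVecLin) Λ
  have hchain : ∑ μ ∈ Λ, ∑ i ∈ fib μ, r i = ∑ μ ∈ Λ, (Efr μ : ℝ) := by
    have h1 : ∑ μ ∈ Λ, ∑ i ∈ fib μ, r i = (d : ℝ) := by rw [hsplit, hd']
    have h2 := Finset.sum_le_sum hle1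
    linarith
  have hEq : ∀ μ ∈ Λ, (∑ i ∈ fib μ, r i) = (Efr μ : ℝ) :=
    (Finset.sum_eq_sum_iff_of_le hle1).mp hchain
  have hν' : ∀ i, ν i = r i + 4 * r i ^ 2 * (1 - lam i) := by
    intro i
    have hri := (hr i).ne'
    rw [hlamdef]
    field_simp
    ring
  have hμ1 : ∀ μ ∈ Λ, μ = 1 := by
    intro μ hμ
    obtain ⟨i₀, _, hi₀⟩ := Finset.mem_image.mp hμ
    have htr := stmt12_trace_identity F lam hSi μ
    have hνfib : ∑ i ∈ fib μ, ν i
        = (∑ i ∈ fib μ, r i) + 4 * (1 - μ) * ∑ i ∈ fib μ, r i ^ 2 := by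
      rw [Finset.mul_sum, ← Finset.sum_add_distrib]
      refine Finset.sum_congr rfl fun i hi => ?_
      have hlami : lam i = μ := (Finset.mem_filter.mp hi).2
      rw [hν' i, hlami]
      ring
    have hKfib : (∑ i ∈ fib μ, r i) = (Efr μ : ℝ) := hEq μ hμ
    have htr2 : μ * (Efr μ : ℝ) = ∑ i ∈ fib μ, ν i := htr
    have htr' : μ * (Efr μ : ℝ)
        = (Efr μ : ℝ) + 4 * (1 - μ) * ∑ i ∈ fib μ, r i ^ 2 := by
      rw [htr2, hνfib, hKfib]
    have hQpos : 0 < ∑ i ∈ fib μ, r i ^ 2 :=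
      Finset.sum_pos (fun i _ => pow_pos (hr i) 2)
        ⟨i₀, Finset.mem_filter.mpr ⟨Finset.mem_univ i₀, hi₀⟩⟩
    have hKnn : (0 : ℝ) ≤ (Efr μ : ℝ) := Nat.cast_nonneg _
    have hfac : (μ - 1) * ((Efr μ : ℝ) + 4 * ∑ i ∈ fib μ, r i ^ 2) = 0 := by
      linear_combination htr'
    rcases mul_eq_zero.mp hfac with h5 | h5
    · linarith [sub_eq_zero.mp h5]
    · nlinarith
  have hlam1 : ∀ i, lam i = 1 := fun i =>
    hμ1 (lam i) (Finset.mem_image_of_mem lam (Finset.mem_univ i))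
  have hνr : ∀ i, ν i = r i := by
    intro i
    rw [hν' i, hlam1 i]
    ring
  have hn1 : 1 ≤ n := le_trans hd hdn
  have i0 : Fin n := ⟨0, by omega⟩
  have h1Λ : (1 : ℝ) ∈ Λ := Finset.mem_image.mpr ⟨i0, Finset.mem_univ i0, hlam1 i0⟩
  have hfib1 : fib 1 = Finset.univ := by
    ext i
    simp [hfib, hlam1 i]
  have hK1 : (Efr 1 : ℝ) = (d : ℝ) := by
    rw [← hEq 1 h1Λ, hfib1, hd']
  have hK1' : Efr 1 = d := by exact_mod_cast hK1
  have hEtop : Module.End.eigenspace ((F * Fᴴ).mulVecLin) (algebraMap ℝ 𝕂 1) = ⊤ := by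
    apply Submodule.eq_top_of_finrank_eq
    rw [Module.finrank_fin_fun]
    exact hK1'
  have hS1 : F * Fᴴ = 1 := by
    ext p q
    have hmemq : Pi.single q (1 : 𝕂) ∈
        Module.End.eigenspace ((F * Fᴴ).mulVecLin) (algebraMap ℝ 𝕂 1) := by
      rw [hEtop]; trivial
    have hq := Module.End.mem_eigenspace_iff.mp hmemq
    rw [Matrix.mulVecLin_apply, Matrix.mulVec_single, map_one, one_smul] at hq
    have := congrFun hq p
    simpa [Matrix.one_apply, Pi.single_apply] using this
  exact hnotPF ⟨hS1, fun i => hνr i⟩
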